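/- Let T ≥ 1 and let G_T : ℝ^T → ℝ be as in the lower-bound construction. Then for every x ∈ ℝ^T and every i ∈ {1,…,T}, if x_i = 0 then ∂G_T/∂x_i (x) = 0. Consequently, prog₀(∇G_T(x)) ≤ prog₀(x), where prog₀(v) := max{i : v_i ≠ 0} (and 0 if v = 0). -/

import Mathlib

open Filter


/-- The bump-like component function `Ψ` of the hard-instance construction. -/
noncomputable def Psi (x : ℝ) : ℝ :=
  if 1 / 2 < x then Real.exp (1 - 1 / (2 * x - 1) ^ 2) else 0

/-- The component function `Λ` of the hard-instance construction. -/
noncomputable def Lam (x : ℝ) : ℝ := 8 * (Real.exp (-x ^ 2 / 2) - 1)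

-- auxiliary definitions and lemmas
noncomputable def psiD (x : ℝ) : ℝ :=
  if 1 / 2 < x then Real.exp (1 - 1 / (2 * x - 1) ^ 2) * (4 / (2 * x - 1) ^ 3) else 0

noncomputable def lamD (x : ℝ) : ℝ := -8 * x * Real.exp (-x ^ 2 / 2)

lemma hasDerivAt_lam (x : ℝ) : HasDerivAt Lam (lamD x) x := by
  have h1 : HasDerivAt (fun t : ℝ => -t ^ 2 / 2) (-x) x := by
    have := ((hasDerivAt_pow 2 x).neg).div_const 2
    simpa using this.congr_deriv (by ring)
  have h2 := ((h1.exp.sub_const 1).const_mul 8)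
  exact h2.congr_deriv (by unfold lamD; ring)

lemma hasDerivAt_mul_abs (u : ℝ) : HasDerivAt (fun t : ℝ => t * |t|) (2 * |u|) u := by
  rcases lt_trichotomy u 0 with h | rfl | h
  · have he : (fun t : ℝ => t * |t|) =ᶠ[nhds u] fun t => -(t * t) := by
      filter_upwards [Iio_mem_nhds h] with t ht
      rw [abs_of_neg ht]; ring
    have : HasDerivAt (fun t : ℝ => -(t * t)) (2 * |u|) u := by
      have := ((hasDerivAt_id u).mul (hasDerivAt_id u)).neg
      exact this.congr_deriv (by simp [abs_of_neg h]; ring)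
    exact this.congr_of_eventuallyEq he
  · rw [hasDerivAt_iff_tendsto_slope]
    have habs : Tendsto (fun t : ℝ => |t|) (nhdsWithin 0 {(0:ℝ)}ᶜ) (nhds 0) := by
      have := continuous_abs.tendsto (0 : ℝ)
      simpa using this.mono_left nhdsWithin_le_nhds
    have heq : (fun t : ℝ => |t|) =ᶠ[nhdsWithin 0 {(0:ℝ)}ᶜ] slope (fun t : ℝ => t * |t|) 0 := by
      filter_upwards [self_mem_nhdsWithin] with t ht
      have ht' : t ≠ 0 := ht
      rw [slope_def_field]
      field_simp
      ring
    simpa using Tendsto.congr' heq habs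
  · have he : (fun t : ℝ => t * |t|) =ᶠ[nhds u] fun t => t * t := by
      filter_upwards [Ioi_mem_nhds h] with t ht
      rw [abs_of_pos ht]
    have : HasDerivAt (fun t : ℝ => t * t) (2 * |u|) u := by
      have := (hasDerivAt_id u).mul (hasDerivAt_id u)
      exact this.congr_deriv (by simp [abs_of_pos h]; ring)
    exact this.congr_of_eventuallyEq he

lemma psi_eq (x : ℝ) : Psi x = Real.exp 1 * expNegInvGlue ((2 * x - 1) * |2 * x - 1|) := by
  unfold Psi
  by_cases h : 1 / 2 < x
  · have h0 : (0:ℝ) < 2 * x - 1 := by linarith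
    rw [if_pos h, abs_of_pos h0, expNegInvGlue]
    rw [if_neg (by nlinarith)]
    rw [← Real.exp_add]
    ring_nf
  · have h0 : 2 * x - 1 ≤ 0 := by push_neg at h; linarith
    rw [if_neg h, expNegInvGlue.zero_of_nonpos (mul_nonpos_iff.2 (Or.inr ⟨h0, abs_nonneg _⟩)), mul_zero]

lemma hasDerivAt_psi (x : ℝ) : HasDerivAt Psi (psiD x) x := by
  have hinner : HasDerivAt (fun t : ℝ => (2 * t - 1) * |2 * t - 1|) (2 * |2 * x - 1| * 2) x := by
    have hl : HasDerivAt (fun t : ℝ => 2 * t - 1) 2 x := by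
      simpa using ((hasDerivAt_id x).const_mul 2).sub_const 1
    exact (hasDerivAt_mul_abs (2 * x - 1)).comp x hl
  have hglue : HasDerivAt expNegInvGlue (deriv expNegInvGlue ((2 * x - 1) * |2 * x - 1|))
      ((2 * x - 1) * |2 * x - 1|) :=
    ((expNegInvGlue.contDiff (n := 1)).differentiable (by norm_num)).differentiableAt.hasDerivAt
  have hcomp := ((hglue.comp x hinner).const_mul (Real.exp 1))
  have hval : Real.exp 1 * (deriv expNegInvGlue ((2 * x - 1) * |2 * x - 1|) * (2 * |2 * x - 1| * 2))
      = psiD x := by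
    rcases lt_trichotomy x (1/2 : ℝ) with h | rfl | h
    · have h0 : 2 * x - 1 < 0 := by linarith
      have harg : (2 * x - 1) * |2 * x - 1| < 0 := by
        have := abs_pos.2 (ne_of_lt h0)
        nlinarith
      have : deriv expNegInvGlue ((2 * x - 1) * |2 * x - 1|) = 0 := by
        have he : expNegInvGlue =ᶠ[nhds ((2 * x - 1) * |2 * x - 1|)] fun _ => (0:ℝ) := by
          filter_upwards [Iio_mem_nhds harg] with t ht
          exact expNegInvGlue.zero_of_nonpos (le_of_lt ht)
        rw [he.deriv_eq, deriv_const]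
      rw [this, psiD, if_neg (by linarith)]
      ring
    · norm_num [psiD]
    · have h0 : (0:ℝ) < 2 * x - 1 := by linarith
      have hne : 2 * x - 1 ≠ 0 := ne_of_gt h0
      have harg : (2 * x - 1) * |2 * x - 1| = (2 * x - 1)^2 := by
        rw [abs_of_pos h0]; ring
      have hpos : (0:ℝ) < (2 * x - 1)^2 := by positivity
      have hd : deriv expNegInvGlue ((2*x-1)^2)
          = Real.exp (-((2*x-1)^2)⁻¹) * (((2*x-1)^2)^2)⁻¹ := by
        have he : expNegInvGlue =ᶠ[nhds ((2*x-1)^2)] fun t => Real.exp (-t⁻¹) := by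
          filter_upwards [Ioi_mem_nhds hpos] with t ht
          rw [expNegInvGlue, if_neg (not_le.2 ht)]
        rw [he.deriv_eq]
        have : HasDerivAt (fun t : ℝ => Real.exp (-t⁻¹))
            (Real.exp (-((2*x-1)^2)⁻¹) * (((2*x-1)^2)^2)⁻¹) ((2*x-1)^2) := by
          have := ((hasDerivAt_inv (ne_of_gt hpos)).neg).exp
          exact this.congr_deriv (by rw [Pi.neg_apply, neg_neg])
        exact this.deriv
      rw [harg, hd, psiD, if_pos h, abs_of_pos h0]
      rw [show (1 : ℝ) - 1 / (2*x-1)^2 = 1 + -((2*x-1)^2)⁻¹ by rw [one_div, sub_eq_add_neg]]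
      rw [Real.exp_add]
      field_simp
      ring
  rw [funext psi_eq]
  exact hcomp.congr_deriv hval

lemma psiD_nonpos {x : ℝ} (h : x ≤ 1/2) : psiD x = 0 := if_neg (not_lt.2 h)
lemma lamD_zero : lamD 0 = 0 := by simp [lamD]

/-- The hard instance `G_T(x) = Ψ(1)Λ(x₁) + ∑_{i=2}^T [Ψ(-x_{i-1})Λ(-x_i) + Ψ(x_{i-1})Λ(x_i)]`
(coordinates are `0`-indexed in Lean: mathematical `x_i` is Lean's `x ⟨i-1, _⟩`). -/
noncomputable def G (T : ℕ) (x : EuclideanSpace ℝ (Fin T)) : ℝ :=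
  ∑ i : Fin T,
    if (i : ℕ) = 0 then Psi 1 * Lam (x i)
    else
      Psi (-(x ⟨(i : ℕ) - 1, Nat.lt_of_le_of_lt (Nat.sub_le _ _) i.isLt⟩)) * Lam (-(x i)) +
        Psi (x ⟨(i : ℕ) - 1, Nat.lt_of_le_of_lt (Nat.sub_le _ _) i.isLt⟩) * Lam (x i)

/-- `prog₀(v) = max{i ∈ {1,…,T} : v_i ≠ 0}`, set to `0` if `v = 0`
(mathematical index `i` corresponds to the Lean coordinate `j : Fin T` with `j + 1 = i`). -/
noncomputable def prog0 {T : ℕ} (v : EuclideanSpace ℝ (Fin T)) : ℕ :=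
  sSup {i : ℕ | i = 0 ∨ ∃ j : Fin T, (j : ℕ) + 1 = i ∧ v j ≠ 0}

def pidx {T : ℕ} (i : Fin T) : Fin T :=
  ⟨(i : ℕ) - 1, Nat.lt_of_le_of_lt (Nat.sub_le _ _) i.isLt⟩

noncomputable def Dmap (T : ℕ) (x : EuclideanSpace ℝ (Fin T)) (i : Fin T) :
    EuclideanSpace ℝ (Fin T) →L[ℝ] ℝ :=
  if (i : ℕ) = 0 then (Psi 1 * lamD (x i)) • EuclideanSpace.proj i
  else
    (Psi (-(x (pidx i))) * (lamD (-(x i)) * (-1)) + Psi (x (pidx i)) * lamD (x i)) •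
        EuclideanSpace.proj i
      + (Lam (-(x i)) * (psiD (-(x (pidx i))) * (-1)) + Lam (x i) * psiD (x (pidx i))) •
        EuclideanSpace.proj (pidx i)

lemma hasFDerivAt_G (T : ℕ) (x : EuclideanSpace ℝ (Fin T)) :
    HasFDerivAt (G T) (∑ i : Fin T, Dmap T x i) x := by
  have h : ∀ i : Fin T, HasFDerivAt
      (fun y : EuclideanSpace ℝ (Fin T) =>
        if (i : ℕ) = 0 then Psi 1 * Lam (y i)
        else Psi (-(y (pidx i))) * Lam (-(y i)) + Psi (y (pidx i)) * Lam (y i))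
      (Dmap T x i) x := by
    intro i
    have hproj : ∀ j : Fin T, HasFDerivAt (fun y : EuclideanSpace ℝ (Fin T) => y j)
        (EuclideanSpace.proj (𝕜 := ℝ) j) x := fun j =>
      ContinuousLinearMap.hasFDerivAt (x := x) (EuclideanSpace.proj (𝕜 := ℝ) (ι := Fin T) j)
    by_cases hi : (i : ℕ) = 0
    · have hfun : (fun y : EuclideanSpace ℝ (Fin T) =>
          if (i : ℕ) = 0 then Psi 1 * Lam (y i)
          else Psi (-(y (pidx i))) * Lam (-(y i)) + Psi (y (pidx i)) * Lam (y i))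
          = fun y => Psi 1 * Lam (y i) := by
        funext y; rw [if_pos hi]
      rw [hfun]
      have hLam : HasFDerivAt (fun y : EuclideanSpace ℝ (Fin T) => Lam (y i))
          (lamD (x i) • EuclideanSpace.proj (𝕜 := ℝ) i) x :=
        (hasDerivAt_lam (x i)).comp_hasFDerivAt (f := fun y : EuclideanSpace ℝ (Fin T) => y i) x (hproj i)
      have := hLam.const_mul (Psi 1)
      refine this.congr_fderiv ?_
      rw [Dmap, if_pos hi, smul_smul]
    · have hfun : (fun y : EuclideanSpace ℝ (Fin T) =>
          if (i : ℕ) = 0 then Psi 1 * Lam (y i)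
          else Psi (-(y (pidx i))) * Lam (-(y i)) + Psi (y (pidx i)) * Lam (y i))
          = fun y => Psi (-(y (pidx i))) * Lam (-(y i)) + Psi (y (pidx i)) * Lam (y i) := by
        funext y; rw [if_neg hi]
      rw [hfun]
      have hPn : HasDerivAt (fun t : ℝ => Psi (-t)) (psiD (-(x (pidx i))) * (-1)) (x (pidx i)) := by
        simpa [Function.comp_def] using
          (hasDerivAt_psi (-(x (pidx i)))).comp (x (pidx i)) (hasDerivAt_neg (x (pidx i)))
      have hLn : HasDerivAt (fun t : ℝ => Lam (-t)) (lamD (-(x i)) * (-1)) (x i) := by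
        simpa [Function.comp_def] using
          (hasDerivAt_lam (-(x i))).comp (x i) (hasDerivAt_neg (x i))
      have hA : HasFDerivAt (fun y : EuclideanSpace ℝ (Fin T) => Psi (-(y (pidx i))))
          ((psiD (-(x (pidx i))) * (-1)) • EuclideanSpace.proj (𝕜 := ℝ) (pidx i)) x :=
        hPn.comp_hasFDerivAt (f := fun y : EuclideanSpace ℝ (Fin T) => y (pidx i)) x (hproj (pidx i))
      have hB : HasFDerivAt (fun y : EuclideanSpace ℝ (Fin T) => Lam (-(y i)))
          ((lamD (-(x i)) * (-1)) • EuclideanSpace.proj (𝕜 := ℝ) i) x :=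
        hLn.comp_hasFDerivAt (f := fun y : EuclideanSpace ℝ (Fin T) => y i) x (hproj i)
      have hC : HasFDerivAt (fun y : EuclideanSpace ℝ (Fin T) => Psi (y (pidx i)))
          (psiD (x (pidx i)) • EuclideanSpace.proj (𝕜 := ℝ) (pidx i)) x :=
        (hasDerivAt_psi (x (pidx i))).comp_hasFDerivAt (f := fun y : EuclideanSpace ℝ (Fin T) => y (pidx i)) x (hproj (pidx i))
      have hD : HasFDerivAt (fun y : EuclideanSpace ℝ (Fin T) => Lam (y i))
          (lamD (x i) • EuclideanSpace.proj (𝕜 := ℝ) i) x :=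
        (hasDerivAt_lam (x i)).comp_hasFDerivAt (f := fun y : EuclideanSpace ℝ (Fin T) => y i) x (hproj i)
      have := (hA.mul hB).add (hC.mul hD)
      refine this.congr_fderiv ?_
      rw [Dmap, if_neg hi]
      refine ContinuousLinearMap.ext fun v => ?_
      simp only [ContinuousLinearMap.add_apply, ContinuousLinearMap.coe_smul',
        Pi.smul_apply, smul_eq_mul]
      ring
  exact HasFDerivAt.fun_sum fun i _ => h i

lemma grad_coord (T : ℕ) (x : EuclideanSpace ℝ (Fin T)) (k : Fin T) :
    gradient (G T) x k = (∑ i : Fin T, Dmap T x i) (EuclideanSpace.single k 1) := by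
  have hf : fderiv ℝ (G T) x = ∑ i : Fin T, Dmap T x i := (hasFDerivAt_G T x).fderiv
  have h2 : (inner ℝ (gradient (G T) x) (EuclideanSpace.single k (1:ℝ)) : ℝ)
      = fderiv ℝ (G T) x (EuclideanSpace.single k 1) :=
    InnerProductSpace.toDual_symm_apply
  rw [EuclideanSpace.inner_single_right] at h2
  simpa [hf] using h2

/-- Every partial derivative of `G_T` vanishes at coordinates where `x`
vanishes; consequently `prog₀(∇G_T(x)) ≤ prog₀(x)`. -/
theorem stmt_15 (T : ℕ) (hT : 1 ≤ T) (x : EuclideanSpace ℝ (Fin T)) :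
    (∀ i : Fin T, x i = 0 → gradient (G T) x i = 0) ∧
    prog0 (gradient (G T) x) ≤ prog0 x := by
  have hz : psiD (0:ℝ) = 0 := psiD_nonpos (by norm_num)
  have key : ∀ k : Fin T, x k = 0 → gradient (G T) x k = 0 := by
    intro k hk
    rw [grad_coord, ContinuousLinearMap.sum_apply]
    apply Finset.sum_eq_zero
    intro i _
    have hs : ∀ j : Fin T, EuclideanSpace.proj (𝕜 := ℝ) j (EuclideanSpace.single k (1:ℝ))
        = if j = k then 1 else 0 := by
      intro j
      simp [EuclideanSpace.single_apply]
    rw [Dmap]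
    by_cases hi : (i : ℕ) = 0
    · rw [if_pos hi]
      simp only [ContinuousLinearMap.coe_smul', Pi.smul_apply, smul_eq_mul, hs]
      rcases eq_or_ne i k with h1 | h1
      · rw [h1, hk, lamD_zero]; ring
      · rw [if_neg h1, mul_zero]
    · rw [if_neg hi]
      simp only [ContinuousLinearMap.add_apply, ContinuousLinearMap.coe_smul',
        Pi.smul_apply, smul_eq_mul, hs]
      have ha : (Psi (-(x (pidx i))) * (lamD (-(x i)) * (-1)) + Psi (x (pidx i)) * lamD (x i))
          * (if i = k then (1:ℝ) else 0) = 0 := by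
        rcases eq_or_ne i k with h1 | h1
        · rw [h1, hk, neg_zero, lamD_zero]; ring
        · rw [if_neg h1, mul_zero]
      have hb : (Lam (-(x i)) * (psiD (-(x (pidx i))) * (-1)) + Lam (x i) * psiD (x (pidx i)))
          * (if pidx i = k then (1:ℝ) else 0) = 0 := by
        rcases eq_or_ne (pidx i) k with h1 | h1
        · rw [h1, hk, neg_zero, hz]; ring
        · rw [if_neg h1, mul_zero]
      rw [ha, hb, add_zero]
  refine ⟨key, ?_⟩
  have hbdd : BddAbove {i : ℕ | i = 0 ∨ ∃ j : Fin T, (j : ℕ) + 1 = i ∧ x j ≠ 0} := by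
    refine ⟨T, ?_⟩
    rintro a (rfl | ⟨j, rfl, -⟩)
    · exact Nat.zero_le _
    · exact j.isLt
  rw [prog0, prog0]
  refine csSup_le ⟨0, Or.inl rfl⟩ fun a ha => ?_
  rcases ha with rfl | ⟨j, rfl, hj⟩
  · exact Nat.zero_le _
  · have hx : x j ≠ 0 := fun h => hj (key j h)
    exact le_csSup hbdd (Or.inr ⟨j, rfl, hx⟩)
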